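/- Under the Weibull proportional hazards model, the mixture ratio of median survival times always lies weakly between the two subgroup ratios of medians: min(θ₁^{−1/k}, (θ₁θ₃)^{−1/k}) ≤ ν^{Rx}/ν^{C} ≤ max(θ₁^{−1/k}, (θ₁θ₃)^{−1/k}); i.e., Simpson's paradox cannot occur for the ratio-of-medians efficacy measure. -/

import Mathlib

/-- Sandwich lemma for the mixture survival function. -/
lemma stmt_11_key (θ2 γ v p q A B : ℝ) (hθ2 : 0 < θ2) (hγ0 : 0 < γ) (hγ1 : γ < 1)
    (hAp : A ≤ p) (hpB : p ≤ B) (hAq : A ≤ q) (hqB : q ≤ B)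
    (hRx : (1 - γ) * Real.exp (-p) + γ * Real.exp (-(θ2 * q)) = 1/2)
    (hC : (1 - γ) * Real.exp (-v) + γ * Real.exp (-(θ2 * v)) = 1/2) :
    A ≤ v ∧ v ≤ B := by
  have h1 : Real.exp (-B) ≤ Real.exp (-p) := Real.exp_le_exp.mpr (by linarith)
  have h2 : Real.exp (-(θ2 * B)) ≤ Real.exp (-(θ2 * q)) :=
    Real.exp_le_exp.mpr (by nlinarith)
  have h3 : Real.exp (-p) ≤ Real.exp (-A) := Real.exp_le_exp.mpr (by linarith)
  have h4 : Real.exp (-(θ2 * q)) ≤ Real.exp (-(θ2 * A)) :=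
    Real.exp_le_exp.mpr (by nlinarith)
  have hfB : (1 - γ) * Real.exp (-B) + γ * Real.exp (-(θ2 * B)) ≤ 1/2 := by nlinarith
  have hfA : 1/2 ≤ (1 - γ) * Real.exp (-A) + γ * Real.exp (-(θ2 * A)) := by nlinarith
  constructor
  · by_contra h
    push_neg at h
    have e1 : Real.exp (-A) < Real.exp (-v) := Real.exp_lt_exp.mpr (by linarith)
    have e2 : Real.exp (-(θ2 * A)) < Real.exp (-(θ2 * v)) :=
      Real.exp_lt_exp.mpr (by nlinarith)
    nlinarith
  · by_contra h
    push_neg at h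
    have e1 : Real.exp (-v) < Real.exp (-B) := Real.exp_lt_exp.mpr (by linarith)
    have e2 : Real.exp (-(θ2 * v)) < Real.exp (-(θ2 * B)) :=
      Real.exp_lt_exp.mpr (by nlinarith)
    nlinarith

lemma stmt_11_ratio_upper (x y c k : ℝ) (hx : 0 < x) (hy : 0 < y) (hc : 0 < c)
    (hk : 0 < k) (h : c * x ^ k ≤ y ^ k) : x / y ≤ c ^ (-(1/k)) := by
  have hkne : k ≠ 0 := ne_of_gt hk
  have h1 : x ^ k ≤ y ^ k * c⁻¹ := by
    rw [mul_comm (y ^ k) c⁻¹, ← div_eq_inv_mul, le_div_iff₀ hc, mul_comm]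
    exact h
  have h2 : (x ^ k) ^ (1/k) ≤ (y ^ k * c⁻¹) ^ (1/k) :=
    Real.rpow_le_rpow (Real.rpow_pos_of_pos hx k).le h1 (by positivity)
  have hxx : (x ^ k) ^ (1/k) = x := by
    rw [← Real.rpow_mul hx.le, mul_one_div_cancel hkne, Real.rpow_one]
  have hyy : (y ^ k * c⁻¹) ^ (1/k) = y * c ^ (-(1/k)) := by
    rw [Real.mul_rpow (Real.rpow_pos_of_pos hy k).le (inv_nonneg.mpr hc.le),
      ← Real.rpow_mul hy.le, mul_one_div_cancel hkne, Real.rpow_one,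
      Real.inv_rpow hc.le, ← Real.rpow_neg hc.le]
  rw [hxx, hyy] at h2
  rw [div_le_iff₀ hy]
  linarith [h2]

lemma stmt_11_ratio_lower (x y c k : ℝ) (hx : 0 < x) (hy : 0 < y) (hc : 0 < c)
    (hk : 0 < k) (h : y ^ k ≤ c * x ^ k) : c ^ (-(1/k)) ≤ x / y := by
  have hkne : k ≠ 0 := ne_of_gt hk
  have h2 : (y ^ k) ^ (1/k) ≤ (c * x ^ k) ^ (1/k) :=
    Real.rpow_le_rpow (Real.rpow_pos_of_pos hy k).le h (by positivity)
  have hyy : (y ^ k) ^ (1/k) = y := by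
    rw [← Real.rpow_mul hy.le, mul_one_div_cancel hkne, Real.rpow_one]
  have hxx : (c * x ^ k) ^ (1/k) = c ^ (1/k) * x := by
    rw [Real.mul_rpow hc.le (Real.rpow_pos_of_pos hx k).le,
      ← Real.rpow_mul hx.le, mul_one_div_cancel hkne, Real.rpow_one]
  rw [hyy, hxx] at h2
  have hcp : (0:ℝ) < c ^ (1/k) := Real.rpow_pos_of_pos hc _
  have hco : c ^ (-(1/k)) * c ^ (1/k) = 1 := by
    rw [← Real.rpow_add hc, neg_add_cancel, Real.rpow_zero]
  have hcn : (0:ℝ) < c ^ (-(1/k)) := Real.rpow_pos_of_pos hc _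
  rw [le_div_iff₀ hy]
  nlinarith

/-- The mixture ratio of medians always lies weakly between the two subgroup
ratios of medians: no Simpson's paradox for ratio of medians. -/
theorem stmt_11 (lam k θ1 θ2 θ3 γ νRx νC : ℝ)
    (hlam : 0 < lam) (hk : 0 < k) (hθ1 : 0 < θ1) (hθ2 : 0 < θ2) (hθ3 : 0 < θ3)
    (hγ : γ ∈ Set.Ioo (0:ℝ) 1) (hνRx : 0 < νRx) (hνC : 0 < νC)
    (hRx : (1 - γ) * Real.exp (-(θ1 * (νRx / lam) ^ k)) +
        γ * Real.exp (-(θ1 * θ2 * θ3 * (νRx / lam) ^ k)) = 1/2)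
    (hC : (1 - γ) * Real.exp (-((νC / lam) ^ k)) +
        γ * Real.exp (-(θ2 * (νC / lam) ^ k)) = 1/2) :
    min (θ1 ^ (-(1/k))) ((θ1 * θ3) ^ (-(1/k))) ≤ νRx / νC ∧
      νRx / νC ≤ max (θ1 ^ (-(1/k))) ((θ1 * θ3) ^ (-(1/k))) := by
  obtain ⟨hγ0, hγ1⟩ := hγ
  set x := νRx / lam with hxdef
  set y := νC / lam with hydef
  have hx : 0 < x := div_pos hνRx hlam
  have hy : 0 < y := div_pos hνC hlam
  have hu : 0 < x ^ k := Real.rpow_pos_of_pos hx k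
  have hv : 0 < y ^ k := Real.rpow_pos_of_pos hy k
  have hratio : νRx / νC = x / y := by
    rw [hxdef, hydef]
    field_simp
  have hRx' : (1 - γ) * Real.exp (-(θ1 * x ^ k)) +
      γ * Real.exp (-(θ2 * (θ1 * θ3 * x ^ k))) = 1/2 := by
    rw [show θ2 * (θ1 * θ3 * x ^ k) = θ1 * θ2 * θ3 * x ^ k by ring]
    exact hRx
  rcases le_total θ1 (θ1 * θ3) with hcase | hcase
  · -- min exponentiated: a = θ1, b = θ1 * θ3
    have hkey := stmt_11_key θ2 γ (y ^ k) (θ1 * x ^ k) (θ1 * θ3 * x ^ k)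
      (θ1 * x ^ k) (θ1 * θ3 * x ^ k) hθ2 hγ0 hγ1
      le_rfl (by nlinarith) (by nlinarith) le_rfl hRx' hC
    obtain ⟨hlo, hhi⟩ := hkey
    have hub : x / y ≤ θ1 ^ (-(1/k)) :=
      stmt_11_ratio_upper x y θ1 k hx hy hθ1 hk hlo
    have hlb : (θ1 * θ3) ^ (-(1/k)) ≤ x / y :=
      stmt_11_ratio_lower x y (θ1 * θ3) k hx hy (by positivity) hk hhi
    rw [hratio]
    exact ⟨le_trans (min_le_right _ _) hlb, le_trans hub (le_max_left _ _)⟩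
  · -- a = θ1 * θ3, b = θ1
    have hkey := stmt_11_key θ2 γ (y ^ k) (θ1 * x ^ k) (θ1 * θ3 * x ^ k)
      (θ1 * θ3 * x ^ k) (θ1 * x ^ k) hθ2 hγ0 hγ1
      (by nlinarith) le_rfl le_rfl (by nlinarith) hRx' hC
    obtain ⟨hlo, hhi⟩ := hkey
    have hub : x / y ≤ (θ1 * θ3) ^ (-(1/k)) :=
      stmt_11_ratio_upper x y (θ1 * θ3) k hx hy (by positivity) hk hlo
    have hlb : θ1 ^ (-(1/k)) ≤ x / y :=
      stmt_11_ratio_lower x y θ1 k hx hy hθ1 hk hhi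
    rw [hratio]
    exact ⟨le_trans (min_le_left _ _) hlb, le_trans hub (le_max_right _ _)⟩
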